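/- arXiv:2311.12743 — 2 statements merged into one kernel-verified Lean document; each statement's English description precedes it below -/
import Mathlib

section
/- Let φ ∈ D(T₀) = D(T). If T₀φ = φ, then the function φ₀ := φ − φ(0) satisfies Tφ₀ = φ₀. Conversely, if Tφ = φ, then T₀φ = φ (i.e., the normalizing constant k := T₂Ψ(0)·exp(−φ(0)/ĉ), where Ψ := ĉ·log T₁φ, necessarily equals 1). In particular, T₀ admits a fixed point if and only if T admits a fixed point, and every fixed point of T is a fixed point of T₀. -/
open MeasureTheory Real Set Filter

noncomputable section

/-- Density of the centered normal distribution with variance `σ²`. -/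
def pdens (σ y : ℝ) : ℝ :=
  (Real.sqrt (2 * Real.pi * σ ^ 2))⁻¹ * Real.exp (-(y ^ 2) / (2 * σ ^ 2))

/-- The operator `T₁`: `T₁φ(v) = ∫ exp((yv − φ(y))/ĉ) p_σ(y) dy` with `ĉ = cσ²`. -/
def T1 (c σ : ℝ) (φ : ℝ → ℝ) (v : ℝ) : ℝ :=
  ∫ y : ℝ, Real.exp ((y * v - φ y) / (c * σ ^ 2)) * pdens σ y

/-- The operator `T₂`: `T₂Ψ(y) = ∫ exp((yv − Ψ(v))/ĉ) Pr(dv)`. -/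
def T2 (c σ : ℝ) (Pr : Measure ℝ) (Ψ : ℝ → ℝ) (y : ℝ) : ℝ :=
  ∫ v : ℝ, Real.exp ((y * v - Ψ v) / (c * σ ^ 2)) ∂Pr

/-- `Ψ = ĉ · log T₁φ`. -/
def Ψof (c σ : ℝ) (φ : ℝ → ℝ) (v : ℝ) : ℝ := c * σ ^ 2 * Real.log (T1 c σ φ v)

/-- The unnormalised operator `T₀φ = ĉ · log T₂(ĉ log T₁ φ)`. -/
def T0op (c σ : ℝ) (Pr : Measure ℝ) (φ : ℝ → ℝ) (y : ℝ) : ℝ :=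
  c * σ ^ 2 * Real.log (T2 c σ Pr (Ψof c σ φ) y)

/-- The normalised operator `Tφ = ĉ · log ( T₂(ĉ log T₁ φ) / T₂(ĉ log T₁ φ)(0) )`. -/
def Tnorm (c σ : ℝ) (Pr : Measure ℝ) (φ : ℝ → ℝ) (y : ℝ) : ℝ :=
  c * σ ^ 2 * Real.log (T2 c σ Pr (Ψof c σ φ) y / T2 c σ Pr (Ψof c σ φ) 0)

/-- Topological support of a measure on `ℝ`. -/
def msupport (Pr : Measure ℝ) : Set ℝ := {v | ∀ U : Set ℝ, IsOpen U → v ∈ U → 0 < Pr U}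

/-- Membership in the common domain `D(T) = D(T₀)`: `T₁φ ∈ (0,∞)` on the support of `Pr`
(finiteness being integrability of the positive integrand) and
`T₂(ĉ log T₁φ) ∈ (0,∞)` everywhere. -/
def memD (c σ : ℝ) (Pr : Measure ℝ) (φ : ℝ → ℝ) : Prop :=
  Measurable φ ∧
  (∀ v ∈ msupport Pr,
    Integrable (fun y : ℝ => Real.exp ((y * v - φ y) / (c * σ ^ 2)) * pdens σ y) ∧
      0 < T1 c σ φ v) ∧
  (∀ y : ℝ,
    Integrable (fun v : ℝ => Real.exp ((y * v - Ψof c σ φ v) / (c * σ ^ 2))) Pr ∧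
      0 < T2 c σ Pr (Ψof c σ φ) y)

/-! ### Auxiliary lemmas -/


lemma pdens_nonneg (σ y : ℝ) : 0 ≤ pdens σ y :=
  mul_nonneg (inv_nonneg.2 (Real.sqrt_nonneg _)) (Real.exp_pos _).le

lemma pdens_measurable (σ : ℝ) : Measurable (pdens σ) := by
  unfold pdens; fun_prop

lemma pdens_integrable {σ : ℝ} (hσ : 0 < σ) : Integrable (pdens σ) := by
  unfold pdens
  apply Integrable.const_mul
  have h : ∀ y : ℝ, -(y ^ 2) / (2 * σ ^ 2) = -(1 / (2 * σ ^ 2)) * y ^ 2 := by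
    intro y; field_simp
  simp_rw [h]
  exact integrable_exp_neg_mul_sq (by positivity)

lemma pdens_integral {σ : ℝ} (hσ : 0 < σ) : ∫ y : ℝ, pdens σ y = 1 := by
  unfold pdens
  rw [integral_const_mul]
  have h : ∀ y : ℝ, -(y ^ 2) / (2 * σ ^ 2) = -(1 / (2 * σ ^ 2)) * y ^ 2 := by
    intro y; field_simp
  simp_rw [h]
  rw [integral_gaussian]
  rw [show Real.pi / (1 / (2 * σ ^ 2)) = 2 * Real.pi * σ ^ 2 by field_simp]
  rw [inv_mul_cancel₀]
  positivity

lemma measurable_T1 {c σ : ℝ} {φ : ℝ → ℝ} (hφ : Measurable φ) :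
    Measurable (T1 c σ φ) := by
  have h : StronglyMeasurable fun p : ℝ × ℝ =>
      Real.exp ((p.2 * p.1 - φ p.2) / (c * σ ^ 2)) * pdens σ p.2 :=
    (((Real.measurable_exp.comp (((measurable_snd.mul measurable_fst).sub
      (hφ.comp measurable_snd)).div_const _)).mul
        ((pdens_measurable σ).comp measurable_snd))).stronglyMeasurable
  exact h.integral_prod_right'.measurable

lemma measurable_Ψof {c σ : ℝ} {φ : ℝ → ℝ} (hφ : Measurable φ) :
    Measurable (Ψof c σ φ) :=
  (Real.measurable_log.comp (measurable_T1 hφ)).const_mul _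

lemma msupport_compl_null (Pr : Measure ℝ) : Pr (msupport Pr)ᶜ = 0 := by
  obtain ⟨b, hbc, -, hb⟩ := TopologicalSpace.exists_countable_basis ℝ
  have hsub : (msupport Pr)ᶜ ⊆ ⋃₀ {s ∈ b | Pr s = 0} := by
    intro v hv
    simp only [msupport, mem_compl_iff, mem_setOf_eq, not_forall] at hv
    obtain ⟨U, hU, hvU, hpos⟩ := hv
    have hU0 : Pr U = 0 := by
      by_contra h
      exact hpos (pos_iff_ne_zero.mpr h)
    obtain ⟨s, hsb, hvs, hsU⟩ := hb.exists_subset_of_mem_open hvU hU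
    exact ⟨s, ⟨hsb, le_antisymm (hU0 ▸ measure_mono hsU) zero_le⟩, hvs⟩
  refine measure_mono_null hsub ?_
  rw [measure_sUnion_null_iff (hbc.mono (sep_subset _ _))]
  exact fun s hs => hs.2

lemma ae_mem_msupport (Pr : Measure ℝ) : ∀ᵐ v ∂Pr, v ∈ msupport Pr := by
  rw [ae_iff]
  exact msupport_compl_null Pr

/-- Part A: a fixed point of `T₀`, shifted by its value at `0`, is a fixed point of `T`. -/
lemma partA {c σ : ℝ} (hc : 0 < c) (hσ : 0 < σ)
    (Pr : Measure ℝ) [IsProbabilityMeasure Pr]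
    (φ : ℝ → ℝ) (hD : memD c σ Pr φ) (hfix : T0op c σ Pr φ = φ) :
    memD c σ Pr (fun y => φ y - φ 0) ∧
      Tnorm c σ Pr (fun y => φ y - φ 0) = fun y => φ y - φ 0 := by
  obtain ⟨hφ, h1, h2⟩ := hD
  have hcb : 0 < c * σ ^ 2 := by positivity
  set cb := c * σ ^ 2 with hcbdef
  set a := φ 0 with ha
  set φ₀ : ℝ → ℝ := fun y => φ y - a with hφ₀
  -- pointwise identity for the T1 integrand
  have hpt : ∀ v y : ℝ, Real.exp ((y * v - φ₀ y) / cb) * pdens σ y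
      = Real.exp (a / cb) * (Real.exp ((y * v - φ y) / cb) * pdens σ y) := by
    intro v y
    rw [← mul_assoc, ← Real.exp_add]
    congr 2
    field_simp
    ring
  have hT1 : ∀ v, T1 c σ φ₀ v = Real.exp (a / cb) * T1 c σ φ v := by
    intro v
    unfold T1
    show ∫ y, Real.exp ((y * v - φ₀ y) / cb) * pdens σ y = _
    simp_rw [hpt v]
    rw [integral_const_mul]
  have hΨ : ∀ v ∈ msupport Pr, Ψof c σ φ₀ v = a + Ψof c σ φ v := by
    intro v hv
    unfold Ψof
    rw [hT1 v, Real.log_mul (Real.exp_ne_zero _) (h1 v hv).2.ne', Real.log_exp,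
      mul_add, mul_div_cancel₀ _ hcb.ne']
  -- a.e. identity for the T2 integrand
  have hint : ∀ y : ℝ, (fun v => Real.exp ((y * v - Ψof c σ φ₀ v) / cb))
      =ᵐ[Pr] fun v => Real.exp (-a / cb) * Real.exp ((y * v - Ψof c σ φ v) / cb) := by
    intro y
    filter_upwards [ae_mem_msupport Pr] with v hv
    rw [hΨ v hv, ← Real.exp_add]
    congr 1
    field_simp
    ring
  have hT2 : ∀ y : ℝ, T2 c σ Pr (Ψof c σ φ₀) y
      = Real.exp (-a / cb) * T2 c σ Pr (Ψof c σ φ) y := by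
    intro y
    unfold T2
    rw [integral_congr_ae (hint y), integral_const_mul]
  have hT2φ : ∀ y : ℝ, T2 c σ Pr (Ψof c σ φ) y = Real.exp (φ y / cb) := by
    intro y
    have := congrFun hfix y
    unfold T0op at this
    have hlog : Real.log (T2 c σ Pr (Ψof c σ φ) y) = φ y / cb := by
      rw [eq_div_iff hcb.ne', hcbdef]
      linarith [this]
    rw [← Real.exp_log (h2 y).2, hlog]
  constructor
  · refine ⟨hφ.sub measurable_const, ?_, ?_⟩
    · intro v hv
      constructor
      · have := ((h1 v hv).1.const_mul (Real.exp (a / cb)))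
        refine this.congr ?_
        filter_upwards with y
        exact (hpt v y).symm
      · rw [show T1 c σ (fun y => φ y - φ 0) v = T1 c σ φ₀ v from rfl, hT1 v]
        exact mul_pos (Real.exp_pos _) (h1 v hv).2
    · intro y
      constructor
      · exact (((h2 y).1.const_mul (Real.exp (-a / cb)))).congr (hint y).symm
      · rw [show T2 c σ Pr (Ψof c σ (fun y => φ y - φ 0)) y = T2 c σ Pr (Ψof c σ φ₀) y from rfl,
          hT2 y]
        exact mul_pos (Real.exp_pos _) (h2 y).2
  · funext y
    show cb * Real.log (T2 c σ Pr (Ψof c σ φ₀) y / T2 c σ Pr (Ψof c σ φ₀) 0) = φ y - a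
    rw [hT2 y, hT2 0, mul_div_mul_left _ _ (Real.exp_ne_zero _), hT2φ y, hT2φ 0,
      ← Real.exp_sub, Real.log_exp, mul_sub, mul_div_cancel₀ _ hcb.ne',
      mul_div_cancel₀ _ hcb.ne']

/-- Part B: every fixed point of `T` is a fixed point of `T₀`. -/
lemma partB {c σ : ℝ} (hc : 0 < c) (hσ : 0 < σ)
    (Pr : Measure ℝ) [IsProbabilityMeasure Pr]
    (φ : ℝ → ℝ) (hD : memD c σ Pr φ) (hfix : Tnorm c σ Pr φ = φ) :
    T0op c σ Pr φ = φ := by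
  obtain ⟨hφ, h1, h2⟩ := hD
  have hcb : 0 < c * σ ^ 2 := by positivity
  set cb := c * σ ^ 2 with hcbdef
  set Ψ := Ψof c σ φ with hΨdef
  set K := T2 c σ Pr Ψ 0 with hKdef
  have hK : 0 < K := (h2 0).2
  -- the fixed point equation gives `T2 Ψ y = K * exp (φ y / cb)`
  have hT2y : ∀ y : ℝ, T2 c σ Pr Ψ y = K * Real.exp (φ y / cb) := by
    intro y
    have := congrFun hfix y
    unfold Tnorm at this
    have hlog : Real.log (T2 c σ Pr Ψ y / K) = φ y / cb := by
      rw [eq_div_iff hcb.ne', hcbdef]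
      linarith [this]
    have hq : T2 c σ Pr Ψ y / K = Real.exp (φ y / cb) := by
      rw [← Real.exp_log (div_pos (h2 y).2 hK), hlog]
    field_simp at hq
    linarith [hq]
  -- the double integral, computed in two ways
  set F : ℝ × ℝ → ℝ := fun p =>
    Real.exp ((p.2 * p.1 - φ p.2 - Ψ p.1) / cb) * pdens σ p.2 with hFdef
  have hFmeas : Measurable F := by
    apply Measurable.mul
    · exact Real.measurable_exp.comp ((((measurable_snd.mul measurable_fst).sub
        (hφ.comp measurable_snd)).sub ((measurable_Ψof hφ).comp measurable_fst)).div_const _)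
    · exact (pdens_measurable σ).comp measurable_snd
  have hswap : ∫⁻ v, ∫⁻ y, ENNReal.ofReal (F (v, y)) ∂(volume : Measure ℝ) ∂Pr
      = ∫⁻ y, ∫⁻ v, ENNReal.ofReal (F (v, y)) ∂Pr ∂(volume : Measure ℝ) := by
    apply lintegral_lintegral_swap
    exact (ENNReal.measurable_ofReal.comp hFmeas).aemeasurable
  -- first computation: equals 1
  have hI1 : ∫⁻ v, ∫⁻ y, ENNReal.ofReal (F (v, y)) ∂(volume : Measure ℝ) ∂Pr = 1 := by
    have hinner : ∀ᵐ v ∂Pr, ∫⁻ y, ENNReal.ofReal (F (v, y)) ∂(volume : Measure ℝ) = 1 := by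
      filter_upwards [ae_mem_msupport Pr] with v hv
      have hptw : ∀ y : ℝ, F (v, y)
          = Real.exp (-Ψ v / cb) * (Real.exp ((y * v - φ y) / cb) * pdens σ y) := by
        intro y
        rw [hFdef]
        simp only
        rw [← mul_assoc, ← Real.exp_add]
        congr 2
        field_simp
        ring
      calc ∫⁻ y, ENNReal.ofReal (F (v, y)) ∂(volume : Measure ℝ)
          = ∫⁻ y, ENNReal.ofReal (Real.exp (-Ψ v / cb))
              * ENNReal.ofReal (Real.exp ((y * v - φ y) / cb) * pdens σ y)
                ∂(volume : Measure ℝ) := by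
            apply lintegral_congr
            intro y
            rw [hptw y, ENNReal.ofReal_mul (Real.exp_pos _).le]
        _ = ENNReal.ofReal (Real.exp (-Ψ v / cb))
              * ∫⁻ y, ENNReal.ofReal (Real.exp ((y * v - φ y) / cb) * pdens σ y)
                ∂(volume : Measure ℝ) := lintegral_const_mul' _ _ ENNReal.ofReal_ne_top
        _ = ENNReal.ofReal (Real.exp (-Ψ v / cb)) * ENNReal.ofReal (T1 c σ φ v) := by
            rw [← ofReal_integral_eq_lintegral_ofReal (h1 v hv).1]
            · rfl
            · filter_upwards with y
              exact mul_nonneg (Real.exp_pos _).le (pdens_nonneg σ y)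
        _ = 1 := by
            rw [← ENNReal.ofReal_mul (Real.exp_pos _).le]
            have : Real.exp (-Ψ v / cb) = (T1 c σ φ v)⁻¹ := by
              rw [hΨdef]
              unfold Ψof
              rw [neg_div, mul_div_cancel_left₀ _ hcb.ne', Real.exp_neg,
                Real.exp_log (h1 v hv).2]
            rw [this, inv_mul_cancel₀ (h1 v hv).2.ne', ENNReal.ofReal_one]
    rw [lintegral_congr_ae hinner, lintegral_one, measure_univ]
  -- second computation: equals ofReal K
  have hI2 : ∫⁻ y, ∫⁻ v, ENNReal.ofReal (F (v, y)) ∂Pr ∂(volume : Measure ℝ)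
      = ENNReal.ofReal K := by
    have hinner : ∀ y : ℝ, ∫⁻ v, ENNReal.ofReal (F (v, y)) ∂Pr
        = ENNReal.ofReal (K * pdens σ y) := by
      intro y
      have hptw : ∀ v : ℝ, F (v, y)
          = (Real.exp (-φ y / cb) * pdens σ y) * Real.exp ((y * v - Ψ v) / cb) := by
        intro v
        rw [hFdef]
        simp only
        rw [mul_comm (Real.exp (-φ y / cb)) (pdens σ y), mul_assoc, ← Real.exp_add,
          mul_comm (pdens σ y)]
        congr 2
        field_simp
        ring
      calc ∫⁻ v, ENNReal.ofReal (F (v, y)) ∂Pr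
          = ∫⁻ v, ENNReal.ofReal (Real.exp (-φ y / cb) * pdens σ y)
              * ENNReal.ofReal (Real.exp ((y * v - Ψ v) / cb)) ∂Pr := by
            apply lintegral_congr
            intro v
            rw [hptw v, ENNReal.ofReal_mul (mul_nonneg (Real.exp_pos _).le (pdens_nonneg σ y))]
        _ = ENNReal.ofReal (Real.exp (-φ y / cb) * pdens σ y)
              * ∫⁻ v, ENNReal.ofReal (Real.exp ((y * v - Ψ v) / cb)) ∂Pr :=
            lintegral_const_mul' _ _ ENNReal.ofReal_ne_top
        _ = ENNReal.ofReal (Real.exp (-φ y / cb) * pdens σ y)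
              * ENNReal.ofReal (T2 c σ Pr Ψ y) := by
            rw [← ofReal_integral_eq_lintegral_ofReal (h2 y).1]
            · rfl
            · filter_upwards with v
              exact (Real.exp_pos _).le
        _ = ENNReal.ofReal (K * pdens σ y) := by
            rw [← ENNReal.ofReal_mul (mul_nonneg (Real.exp_pos _).le (pdens_nonneg σ y)),
              hT2y y]
            congr 1
            rw [show Real.exp (-φ y / cb) * pdens σ y * (K * Real.exp (φ y / cb))
                = K * pdens σ y * (Real.exp (-φ y / cb) * Real.exp (φ y / cb)) from by ring,
              ← Real.exp_add, neg_div, neg_add_cancel, Real.exp_zero, mul_one]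
    simp_rw [hinner]
    have : ∀ y : ℝ, ENNReal.ofReal (K * pdens σ y)
        = ENNReal.ofReal K * ENNReal.ofReal (pdens σ y) := fun y =>
      ENNReal.ofReal_mul hK.le
    simp_rw [this]
    rw [lintegral_const_mul' _ _ ENNReal.ofReal_ne_top,
      ← ofReal_integral_eq_lintegral_ofReal (pdens_integrable hσ)
        (Filter.Eventually.of_forall (pdens_nonneg σ)), pdens_integral hσ,
      ENNReal.ofReal_one, mul_one]
  have hKone : K = 1 := by
    have : ENNReal.ofReal K = 1 := by rw [← hI2, ← hswap, hI1]
    have h := ENNReal.ofReal_eq_one.mp this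
    linarith [h]
  funext y
  show cb * Real.log (T2 c σ Pr Ψ y) = φ y
  rw [hT2y y, hKone, one_mul, Real.log_exp, mul_div_cancel₀ _ hcb.ne']

/-- if `T₀φ = φ` then `φ₀ := φ − φ(0)` satisfies `Tφ₀ = φ₀`; if `Tφ = φ` then
`T₀φ = φ`; in particular `T₀` has a fixed point iff `T` has one, and every fixed point of `T`
is a fixed point of `T₀`. -/
theorem stmt0 (c σ : ℝ) (hc : 0 < c) (hσ : 0 < σ)
    (Pr : Measure ℝ) [IsProbabilityMeasure Pr] :
    (∀ φ : ℝ → ℝ, memD c σ Pr φ → T0op c σ Pr φ = φ →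
      Tnorm c σ Pr (fun y => φ y - φ 0) = fun y => φ y - φ 0) ∧
    (∀ φ : ℝ → ℝ, memD c σ Pr φ → Tnorm c σ Pr φ = φ → T0op c σ Pr φ = φ) ∧
    ((∃ φ : ℝ → ℝ, memD c σ Pr φ ∧ T0op c σ Pr φ = φ) ↔
      (∃ φ : ℝ → ℝ, memD c σ Pr φ ∧ Tnorm c σ Pr φ = φ)) := by
  refine ⟨fun φ hD hfix => (partA hc hσ Pr φ hD hfix).2,
    fun φ hD hfix => partB hc hσ Pr φ hD hfix, ?_⟩
  constructor
  · rintro ⟨φ, hD, hfix⟩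
    exact ⟨fun y => φ y - φ 0, (partA hc hσ Pr φ hD hfix).1, (partA hc hσ Pr φ hD hfix).2⟩
  · rintro ⟨φ, hD, hfix⟩
    exact ⟨φ, hD, partB hc hσ Pr φ hD hfix⟩


end
end

section
/- Suppose Π is the Gaussian distribution N(μ, γ²) with γ > 0. Let λ* := ( −c + √( c² + 4γ²/σ² ) ) / 2, which is the unique positive root of σ²λ² + ĉλ − γ² = 0, and set φ*(y) := λ* y²/2 + μ y. Then T₀φ* = φ*, and Ψ*(v) := ĉ·log T₁φ*(v) = (ĉ/2)·log( c/(c+λ*) ) + (μ−v)²/(2(c+λ*)) for all v ∈ ℝ. -/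
open MeasureTheory Real Set Filter

noncomputable section

/-- Gaussian integral with a linear term, by completing the square. -/
lemma gauss_int {a : ℝ} (ha : 0 < a) (b : ℝ) :
    (∫ y : ℝ, Real.exp (-a * y ^ 2 + b * y)) =
      Real.sqrt (π / a) * Real.exp (b ^ 2 / (4 * a)) := by
  have key : ∀ y : ℝ, Real.exp (-a * y ^ 2 + b * y)
      = Real.exp (b ^ 2 / (4 * a)) * Real.exp (-a * (y - b / (2 * a)) ^ 2) := by
    intro y
    rw [← Real.exp_add]
    congr 1
    field_simp
    ring
  simp_rw [key]
  rw [MeasureTheory.integral_const_mul,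
    integral_sub_right_eq_self (μ := volume) (fun y => Real.exp (-a * y ^ 2)) (b / (2 * a)),
    integral_gaussian]
  ring

/-- Explicit value of `T₁` on the quadratic `φ*`. -/
lemma T1_eq (c σ μ lam : ℝ) (hc : 0 < c) (hσ : 0 < σ) (hl : 0 < lam) (v : ℝ) :
    T1 c σ (fun y => lam * y ^ 2 / 2 + μ * y) v
      = Real.sqrt (c / (c + lam)) *
        Real.exp ((v - μ) ^ 2 / (2 * (c * σ ^ 2) * (c + lam))) := by
  have hk : 0 < c + lam := by linarith
  have hcs : (0:ℝ) < c * σ ^ 2 := by positivity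
  have ha : (0:ℝ) < (c + lam) / (2 * (c * σ ^ 2)) := by positivity
  have key : ∀ y : ℝ,
      Real.exp ((y * v - (lam * y ^ 2 / 2 + μ * y)) / (c * σ ^ 2)) * pdens σ y
      = (Real.sqrt (2 * π * σ ^ 2))⁻¹ *
          Real.exp (-((c + lam) / (2 * (c * σ ^ 2))) * y ^ 2 + ((v - μ) / (c * σ ^ 2)) * y) := by
    intro y
    unfold pdens
    rw [mul_left_comm, ← Real.exp_add]
    congr 2
    field_simp
    ring
  unfold T1
  simp_rw [key]
  rw [MeasureTheory.integral_const_mul, gauss_int ha]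
  have h1 : π / ((c + lam) / (2 * (c * σ ^ 2))) = (2 * π * σ ^ 2) * (c / (c + lam)) := by
    field_simp
  have h2 : ((v - μ) / (c * σ ^ 2)) ^ 2 / (4 * ((c + lam) / (2 * (c * σ ^ 2))))
      = (v - μ) ^ 2 / (2 * (c * σ ^ 2) * (c + lam)) := by
    field_simp
    ring
  have hs : (0:ℝ) < Real.sqrt (2 * π * σ ^ 2) := by
    apply Real.sqrt_pos.2; positivity
  rw [h1, h2, Real.sqrt_mul (show (0:ℝ) ≤ 2 * π * σ ^ 2 by positivity) (c / (c + lam))]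
  rw [← mul_assoc, ← mul_assoc, inv_mul_cancel₀ hs.ne', one_mul]

/-- Explicit value of `Ψ* = ĉ log T₁φ*`. -/
lemma Psi_eq (c σ μ lam : ℝ) (hc : 0 < c) (hσ : 0 < σ) (hl : 0 < lam) (v : ℝ) :
    Ψof c σ (fun y => lam * y ^ 2 / 2 + μ * y) v
      = (c * σ ^ 2) / 2 * Real.log (c / (c + lam)) + (μ - v) ^ 2 / (2 * (c + lam)) := by
  have hk : 0 < c + lam := by linarith
  have hcs : (0:ℝ) < c * σ ^ 2 := by positivity
  have hck : (0:ℝ) < c / (c + lam) := by positivity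
  unfold Ψof
  rw [T1_eq c σ μ lam hc hσ hl v,
    Real.log_mul (Real.sqrt_pos.2 hck).ne' (Real.exp_ne_zero _),
    Real.log_exp, Real.log_sqrt hck.le]
  have : (μ - v) ^ 2 = (v - μ) ^ 2 := by ring
  rw [this]
  field_simp

/-- Explicit value of `T₂Ψ*` for the Gaussian prior. -/
lemma T2_eq (c σ μ γ lam : ℝ) (hc : 0 < c) (hσ : 0 < σ) (hγ : 0 < γ) (hl : 0 < lam)
    (hq : γ ^ 2 = lam * σ ^ 2 * (c + lam)) (y : ℝ) :
    T2 c σ (ProbabilityTheory.gaussianReal μ (Real.toNNReal (γ ^ 2)))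
        (fun v => (c * σ ^ 2) / 2 * Real.log (c / (c + lam)) + (μ - v) ^ 2 / (2 * (c + lam))) y
      = Real.exp ((lam * y ^ 2 / 2 + μ * y) / (c * σ ^ 2)) := by
  have hk : 0 < c + lam := by linarith
  have hcs : (0:ℝ) < c * σ ^ 2 := by positivity
  have hck : (0:ℝ) < c / (c + lam) := by positivity
  have hγ2 : (0:ℝ) < γ ^ 2 := by positivity
  have hV : Real.toNNReal (γ ^ 2) ≠ 0 := by
    simp [Real.toNNReal_eq_zero, not_le, hγ2, hγ.ne']
  have hVc : ((γ ^ 2).toNNReal : ℝ) = γ ^ 2 := Real.coe_toNNReal _ hγ2.le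
  have hg : (0:ℝ) < 2 * π * γ ^ 2 := by positivity
  have hsg : Real.sqrt (2 * π * γ ^ 2) ≠ 0 := (Real.sqrt_pos.2 hg).ne'
  have hsck : Real.sqrt (c / (c + lam)) ≠ 0 := (Real.sqrt_pos.2 hck).ne'
  have hF : Real.exp (-(Real.log (c / (c + lam))) / 2) = (Real.sqrt (c / (c + lam)))⁻¹ := by
    rw [neg_div, ← Real.log_sqrt hck.le, ← Real.log_inv,
      Real.exp_log (by positivity)]
  set A : ℝ := 1 / (2 * (c * σ ^ 2) * lam) with hA_def
  have hA : 0 < A := by positivity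
  set B : ℝ := y / (c * σ ^ 2) + μ / ((c * σ ^ 2) * lam) with hB_def
  set c0 : ℝ := -(μ ^ 2 / (2 * (c * σ ^ 2) * lam)) with hc0_def
  unfold T2
  rw [ProbabilityTheory.gaussianReal_of_var_ne_zero _ hV]
  rw [show (volume.withDensity (ProbabilityTheory.gaussianPDF μ (Real.toNNReal (γ ^ 2))))
      = volume.withDensity (fun x =>
          ((Real.toNNReal (ProbabilityTheory.gaussianPDFReal μ (Real.toNNReal (γ ^ 2)) x)) : ENNReal))
      from rfl]
  rw [integral_withDensity_eq_integral_smul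
      ((ProbabilityTheory.measurable_gaussianPDFReal _ _).real_toNNReal) _]
  have key : ∀ v : ℝ,
      (Real.toNNReal (ProbabilityTheory.gaussianPDFReal μ (Real.toNNReal (γ ^ 2)) v)) •
        Real.exp ((y * v - ((c * σ ^ 2) / 2 * Real.log (c / (c + lam))
            + (μ - v) ^ 2 / (2 * (c + lam)))) / (c * σ ^ 2))
      = ((Real.sqrt (c / (c + lam)))⁻¹ * (Real.sqrt (2 * π * γ ^ 2))⁻¹ * Real.exp c0) *
          Real.exp (-A * v ^ 2 + B * v) := by
    intro v
    rw [NNReal.smul_def, Real.coe_toNNReal _ (ProbabilityTheory.gaussianPDFReal_nonneg _ _ _)]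
    unfold ProbabilityTheory.gaussianPDFReal
    rw [hVc]
    have he : Real.exp ((y * v - ((c * σ ^ 2) / 2 * Real.log (c / (c + lam))
        + (μ - v) ^ 2 / (2 * (c + lam)))) / (c * σ ^ 2))
        = (Real.sqrt (c / (c + lam)))⁻¹ *
            Real.exp (-A * v ^ 2 + B * v + c0 + (v - μ) ^ 2 / (2 * γ ^ 2)) := by
      rw [← hF, ← Real.exp_add]
      congr 1
      rw [hA_def, hB_def, hc0_def, hq]
      field_simp
      ring
    rw [he, smul_eq_mul]
    rw [show ∀ p q K1 K2 : ℝ, (K1 * Real.exp p) * (K2 * Real.exp q)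
        = K1 * K2 * Real.exp (p + q) from fun p q K1 K2 => by rw [Real.exp_add]; ring]
    rw [mul_assoc ((Real.sqrt (c / (c + lam)))⁻¹ * (Real.sqrt (2 * π * γ ^ 2))⁻¹) _ _,
      ← Real.exp_add]
    congr 1
    · ring
    · exact congrArg Real.exp (by ring)
  simp_rw [key]
  rw [MeasureTheory.integral_const_mul, gauss_int hA]
  have hπA : π / A = (2 * π * γ ^ 2) * (c / (c + lam)) := by
    rw [hA_def, hq]
    field_simp
  rw [hπA, Real.sqrt_mul hg.le]
  have hexp : Real.exp c0 * Real.exp (B ^ 2 / (4 * A))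
      = Real.exp ((lam * y ^ 2 / 2 + μ * y) / (c * σ ^ 2)) := by
    rw [← Real.exp_add]
    congr 1
    rw [hA_def, hB_def, hc0_def]
    field_simp
    ring
  calc (Real.sqrt (c / (c + lam)))⁻¹ * (Real.sqrt (2 * π * γ ^ 2))⁻¹ * Real.exp c0 *
        (Real.sqrt (2 * π * γ ^ 2) * Real.sqrt (c / (c + lam)) * Real.exp (B ^ 2 / (4 * A)))
      = ((Real.sqrt (c / (c + lam)))⁻¹ * Real.sqrt (c / (c + lam))) *
        ((Real.sqrt (2 * π * γ ^ 2))⁻¹ * Real.sqrt (2 * π * γ ^ 2)) *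
        (Real.exp c0 * Real.exp (B ^ 2 / (4 * A))) := by ring
    _ = Real.exp ((lam * y ^ 2 / 2 + μ * y) / (c * σ ^ 2)) := by
        rw [inv_mul_cancel₀ hsck, inv_mul_cancel₀ hsg, hexp, one_mul, one_mul]

/-- for Gaussian `Pr = N(μ, γ²)` and
`λ* = (−c + √(c² + 4γ²/σ²))/2` (the unique positive root of `σ²λ² + ĉλ − γ² = 0`),
the quadratic `φ*(y) = λ*y²/2 + μy` is a fixed point of `T₀`, with
`Ψ*(v) = (ĉ/2) log(c/(c+λ*)) + (μ−v)²/(2(c+λ*))`. -/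
theorem stmt14 (c σ μ γ : ℝ) (hc : 0 < c) (hσ : 0 < σ) (hγ : 0 < γ)
    (Pr : Measure ℝ) (hPr : Pr = ProbabilityTheory.gaussianReal μ (Real.toNNReal (γ ^ 2)))
    (lam : ℝ) (hlam : lam = (-c + Real.sqrt (c ^ 2 + 4 * γ ^ 2 / σ ^ 2)) / 2) :
    (0 < lam ∧ σ ^ 2 * lam ^ 2 + c * σ ^ 2 * lam - γ ^ 2 = 0 ∧
      (∀ l : ℝ, 0 < l → σ ^ 2 * l ^ 2 + c * σ ^ 2 * l - γ ^ 2 = 0 → l = lam)) ∧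
    T0op c σ Pr (fun y => lam * y ^ 2 / 2 + μ * y) = (fun y => lam * y ^ 2 / 2 + μ * y) ∧
    (∀ v : ℝ, Ψof c σ (fun y => lam * y ^ 2 / 2 + μ * y) v =
      (c * σ ^ 2) / 2 * Real.log (c / (c + lam)) + (μ - v) ^ 2 / (2 * (c + lam))) := by
  have hσ2 : (0:ℝ) < σ ^ 2 := by positivity
  have hsq : Real.sqrt (c ^ 2 + 4 * γ ^ 2 / σ ^ 2) ^ 2 = c ^ 2 + 4 * γ ^ 2 / σ ^ 2 :=
    Real.sq_sqrt (by positivity)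
  have hsgt : c < Real.sqrt (c ^ 2 + 4 * γ ^ 2 / σ ^ 2) := by
    nlinarith [Real.sqrt_nonneg (c ^ 2 + 4 * γ ^ 2 / σ ^ 2), hsq,
      div_pos (by positivity : (0:ℝ) < 4 * γ ^ 2) hσ2]
  have hl : 0 < lam := by rw [hlam]; linarith
  have heq : σ ^ 2 * lam ^ 2 + c * σ ^ 2 * lam - γ ^ 2 = 0 := by
    have h4 : Real.sqrt (c ^ 2 + 4 * γ ^ 2 / σ ^ 2) ^ 2 * σ ^ 2 = c ^ 2 * σ ^ 2 + 4 * γ ^ 2 := by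
      rw [hsq]; field_simp
    rw [hlam]
    nlinarith [h4]
  have hq : γ ^ 2 = lam * σ ^ 2 * (c + lam) := by nlinarith [heq]
  have hΨ : ∀ v : ℝ, Ψof c σ (fun y => lam * y ^ 2 / 2 + μ * y) v =
      (c * σ ^ 2) / 2 * Real.log (c / (c + lam)) + (μ - v) ^ 2 / (2 * (c + lam)) :=
    Psi_eq c σ μ lam hc hσ hl
  refine ⟨⟨hl, heq, ?_⟩, ?_, hΨ⟩
  · intro l hl0 hleq
    have h0 : (l - lam) * (σ ^ 2 * (l + lam) + c * σ ^ 2) = 0 := by linear_combination hleq - heq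
    rcases mul_eq_zero.1 h0 with h | h
    · linarith [sub_eq_zero.1 h]
    · nlinarith
  · funext y
    unfold T0op
    rw [funext hΨ, hPr, T2_eq c σ μ γ lam hc hσ hγ hl hq y, Real.log_exp]
    field_simp

end
end
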